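/- Assume K has characteristic 0. Let χ ∈ Hom(H′, K×), and let V and W be two semilinear representations of H over K with dim_K V = dim_K W = 1 such that h′•v = χ(h′)·v for all h′ ∈ H′, v ∈ V and h′•w = χ(h′)·w for all h′ ∈ H′, w ∈ W. Then V and W are isomorphic as semilinear representations of H over K (i.e., there is a bijective K-linear H-equivariant map V → W). -/

import Mathlib

/-- A semilinear representation of `H` over `K`: a `K`-vector space `V` with an
action of `H` by additive automorphisms such that `h • (c • v) = (h • c) • (h • v)`. -/
structure SemilinearRep (K H : Type) [Field K] [Group H] [MulSemiringAction H K] where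
  carrier : Type
  [isAddCommGroup : AddCommGroup carrier]
  [isModule : Module K carrier]
  [isDistribMulAction : DistribMulAction H carrier]
  semilinear : ∀ (h : H) (c : K) (v : carrier), h • (c • v) = (h • c) • (h • v)

attribute [instance] SemilinearRep.isAddCommGroup SemilinearRep.isModule
  SemilinearRep.isDistribMulAction

variable {K H : Type} [Field K] [Group H] [MulSemiringAction H K]

/-- An `H`-invariant `K`-subspace (a subrepresentation). -/
def SemilinearRep.IsSubrep (V : SemilinearRep K H) (W : Submodule K V.carrier) : Prop :=
  ∀ (h : H), ∀ w ∈ W, h • w ∈ W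

/-- A semilinear representation is simple if it is nonzero and its only
subrepresentations are `⊥` and `⊤`. -/
def SemilinearRep.IsSimple (V : SemilinearRep K H) : Prop :=
  Nontrivial V.carrier ∧
    ∀ W : Submodule K V.carrier, V.IsSubrep W → W = ⊥ ∨ W = ⊤

/-- Two semilinear representations are isomorphic if there is a bijective
`K`-linear `H`-equivariant map between them. -/
def SemilinearRep.Iso (V W : SemilinearRep K H) : Prop :=
  ∃ e : V.carrier ≃ₗ[K] W.carrier, ∀ (h : H) (v : V.carrier), e (h • v) = h • e v

/-- The kernel `H′` of the action of `H` on `K`. -/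
def kerAct (K H : Type) [Field K] [Group H] [MulSemiringAction H K] : Subgroup H where
  carrier := {h : H | ∀ c : K, h • c = c}
  one_mem' := fun c => one_smul H c
  mul_mem' := by
    intro a b ha hb c
    simp only [Set.mem_setOf_eq] at *
    rw [mul_smul, hb, ha]
  inv_mem' := by
    intro a ha c
    simp only [Set.mem_setOf_eq] at *
    conv_lhs => rw [← ha c]
    rw [inv_smul_smul]

/-- in characteristic 0, two one-dimensional semilinear representations
of `H` on which `H′` acts by the same character `χ` are isomorphic. -/
theorem one_dim_semilinear_rep_unique [CharZero K] [Finite H]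
    (e m : ℕ)
    (hcomm : ∀ a b : ↥(kerAct K H), a * b = b * a)
    (hexp : Monoid.exponent ↥(kerAct K H) = e)
    (hroot : ∃ ζ : K, IsPrimitiveRoot ζ e)
    (χs : Fin m → (↥(kerAct K H) →* Kˣ))
    (hgen : Subgroup.closure (Set.range χs) = ⊤)
    (Vs : Fin m → SemilinearRep K H)
    (hVsdim : ∀ i, Module.finrank K (Vs i).carrier = 1)
    (hVsact : ∀ (i : Fin m) (h' : ↥(kerAct K H)) (v : (Vs i).carrier),
      (h' : H) • v = ((χs i h' : Kˣ) : K) • v)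
    (χ : ↥(kerAct K H) →* Kˣ)
    (V W : SemilinearRep K H)
    (hVdim : Module.finrank K V.carrier = 1)
    (hWdim : Module.finrank K W.carrier = 1)
    (hVact : ∀ (h' : ↥(kerAct K H)) (v : V.carrier), (h' : H) • v = ((χ h' : Kˣ) : K) • v)
    (hWact : ∀ (h' : ↥(kerAct K H)) (w : W.carrier), (h' : H) • w = ((χ h' : Kˣ) : K) • w) :
    V.Iso W := by
  classical
  have : Fintype H := Fintype.ofFinite H
  -- bases
  obtain ⟨bV⟩ := (finrank_eq_one_iff (Fin 1)).mp hVdim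
  obtain ⟨bW⟩ := (finrank_eq_one_iff (Fin 1)).mp hWdim
  set v₀ : V.carrier := bV 0 with hv₀def
  set w₀ : W.carrier := bW 0 with hw₀def
  have hv₀ : v₀ ≠ 0 := bV.ne_zero 0
  have hw₀ : w₀ ≠ 0 := bW.ne_zero 0
  have hVrep : ∀ v : V.carrier, (bV.repr v 0) • v₀ = v := by
    intro v
    have := bV.sum_repr v
    simpa [Fin.sum_univ_one] using this
  have hWrep : ∀ w : W.carrier, (bW.repr w 0) • w₀ = w := by
    intro w
    have := bW.sum_repr w
    simpa [Fin.sum_univ_one] using this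
  have hVinj : ∀ μ ν : K, μ • v₀ = ν • v₀ → μ = ν := by
    intro μ ν h
    have : (μ - ν) • v₀ = 0 := by rw [sub_smul, h, sub_self]
    rcases smul_eq_zero.mp this with h | h
    · exact sub_eq_zero.mp h
    · exact absurd h hv₀
  have hWinj : ∀ μ ν : K, μ • w₀ = ν • w₀ → μ = ν := by
    intro μ ν h
    have : (μ - ν) • w₀ = 0 := by rw [sub_smul, h, sub_self]
    rcases smul_eq_zero.mp this with h | h
    · exact sub_eq_zero.mp h
    · exact absurd h hw₀
  -- cocycles a, b
  set a : H → K := fun h => bV.repr (h • v₀) 0 with hadef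
  set b : H → K := fun h => bW.repr (h • w₀) 0 with hbdef
  have ha : ∀ h : H, a h • v₀ = h • v₀ := fun h => hVrep _
  have hb : ∀ h : H, b h • w₀ = h • w₀ := fun h => hWrep _
  have ha0 : ∀ h : H, a h ≠ 0 := by
    intro h hc
    apply hv₀
    have h1 : h • v₀ = 0 := by rw [← ha h, hc, zero_smul]
    have := congrArg (fun x => h⁻¹ • x) h1
    simpa [inv_smul_smul] using this
  have hb0 : ∀ h : H, b h ≠ 0 := by
    intro h hc
    apply hw₀
    have h1 : h • w₀ = 0 := by rw [← hb h, hc, zero_smul]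
    have := congrArg (fun x => h⁻¹ • x) h1
    simpa [inv_smul_smul] using this
  have hacoc : ∀ g h : H, a (g * h) = (g • a h) * a g := by
    intro g h
    apply hVinj
    rw [ha, mul_smul, ← ha h, V.semilinear, ← ha g, mul_smul]
  have hbcoc : ∀ g h : H, b (g * h) = (g • b h) * b g := by
    intro g h
    apply hWinj
    rw [hb, mul_smul, ← hb h, W.semilinear, ← hb g, mul_smul]
  have haχ : ∀ h' : ↥(kerAct K H), a ↑h' = ((χ h' : Kˣ) : K) := by
    intro h'
    apply hVinj
    rw [ha]
    exact hVact h' v₀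
  have hbχ : ∀ h' : ↥(kerAct K H), b ↑h' = ((χ h' : Kˣ) : K) := by
    intro h'
    apply hWinj
    rw [hb]
    exact hWact h' w₀
  -- the quotient cocycle c
  set c : H → K := fun h => b h / a h with hcdef
  have hc0 : ∀ h : H, c h ≠ 0 := fun h => div_ne_zero (hb0 h) (ha0 h)
  have hsmul_div : ∀ (g : H) (x y : K), g • (x / y) = (g • x) / (g • y) := by
    intro g x y
    rw [div_eq_mul_inv, smul_mul', smul_inv'', div_eq_mul_inv]
  have hccoc : ∀ g h : H, c (g * h) = (g • c h) * c g := by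
    intro g h
    simp only [hcdef, hacoc, hbcoc, hsmul_div]
    field_simp
  have hc1 : ∀ h : H, (∀ x : K, h • x = x) → c h = 1 := by
    intro h hh
    have hh' : h ∈ kerAct K H := hh
    have h1 := haχ ⟨h, hh'⟩
    have h2 := hbχ ⟨h, hh'⟩
    simp only [hcdef]
    rw [h1, h2]
    exact div_self (Units.ne_zero _)
  -- constancy on cosets
  have hc_coset : ∀ (g h : H), (∀ x : K, h • x = x) → c (g * h) = c g := by
    intro g h hh
    rw [hccoc, hc1 h hh, smul_one, one_mul]
  -- nonvanishing of the "Hilbert 90" sum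
  set f : H → (K →* K) := fun h => (MulSemiringAction.toRingHom H K h).toMonoidHom with hfdef
  have hfapp : ∀ (h : H) (x : K), f h x = h • x := fun h x => rfl
  have hSne : ∃ μ : K, (∑ h : H, c h * (h • μ)) ≠ 0 := by
    by_contra hcon
    push_neg at hcon
    set T : Finset (K →* K) := Finset.univ.image f with hTdef
    set g : (K →* K) → K := fun σ => ∑ h ∈ Finset.univ.filter (fun h => f h = σ), c h with hgdef
    have hsum : ∑ σ ∈ T, g σ • (σ : K → K) = 0 := by
      funext μ
      have h1 : ∑ σ ∈ T, g σ * σ μ = ∑ h : H, c h * (h • μ) := by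
        rw [hTdef]
        refine Finset.sum_image' (fun h => c h * (h • μ)) ?_
        intro i _
        rw [hgdef, Finset.sum_mul]
        refine Finset.sum_congr rfl ?_
        intro x hx
        simp only [Finset.mem_filter] at hx
        have hxi : x • μ = i • μ := by
          have := congrArg (fun σ : K →* K => σ μ) hx.2
          simpa [hfapp] using this
        show c x * i • μ = c x * (x • μ)
        rw [hxi]
      simp only [Finset.sum_apply, Pi.smul_apply, smul_eq_mul, Pi.zero_apply]
      rw [h1, hcon μ]
    have hlin := linearIndependent_iff'.mp (linearIndependent_monoidHom K K) T g hsum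
    have hmem : f 1 ∈ T := Finset.mem_image_of_mem f (Finset.mem_univ 1)
    have hg1 : g (f 1) = 0 := hlin (f 1) hmem
    have : g (f 1) = (Finset.univ.filter (fun h => f h = f 1)).card := by
      rw [hgdef, Finset.card_eq_sum_ones, Nat.cast_sum]
      apply Finset.sum_congr rfl
      intro x hx
      simp only [Finset.mem_filter] at hx
      have hx1 : ∀ y : K, x • y = y := by
        intro y
        have := congrArg (fun σ : K →* K => σ y) hx.2
        simpa [hfapp, one_smul] using this
      simp [hc1 x hx1]
    rw [this] at hg1
    have hpos : (Finset.univ.filter (fun h => f h = f 1)).card ≠ 0 := by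
      refine (Finset.card_pos.mpr ⟨1, by simp⟩).ne'
    exact (Nat.cast_ne_zero (R := K)).mpr hpos hg1
  obtain ⟨μ₀, hμ₀⟩ := hSne
  set lam : K := ∑ h : H, c h * (h • μ₀) with hlamdef
  have hlam0 : lam ≠ 0 := hμ₀
  -- the coboundary property
  have hlam_eq : ∀ g : H, g • lam = lam / c g := by
    intro g
    rw [hlamdef, Finset.smul_sum]
    have h1 : ∀ h : H, g • (c h * (h • μ₀)) = (c (g * h) * ((g * h) • μ₀)) / c g := by
      intro h
      rw [smul_mul', ← mul_smul]
      have : g • c h = c (g * h) / c g := by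
        rw [hccoc g h, mul_div_assoc, div_self (hc0 g), mul_one]
      rw [this]
      ring
    simp only [h1]
    rw [← Finset.sum_div]
    congr 1
    exact Fintype.sum_equiv (Equiv.mulLeft g) _ _ (fun h => rfl)
  have hkey : ∀ h : H, a h * lam = (h • lam) * b h := by
    intro h
    rw [hlam_eq h]
    simp only [hcdef]
    rw [div_div_eq_mul_div, div_mul_cancel₀ _ (hb0 h)]
    ring
  -- build the isomorphism
  set bW' : Module.Basis (Fin 1) K W.carrier := bW.unitsSMul (fun _ => Units.mk0 lam hlam0) with hbW'def
  have hbW'0 : bW' 0 = lam • w₀ := by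
    rw [hbW'def, Module.Basis.unitsSMul_apply]
    rfl
  refine ⟨bV.equiv bW' (Equiv.refl _), ?_⟩
  have heq : ∀ μ : K, (bV.equiv bW' (Equiv.refl _)) (μ • v₀) = μ • lam • w₀ := by
    intro μ
    rw [map_smul, hv₀def, Module.Basis.equiv_apply, Equiv.refl_apply, hbW'0]
  intro h v
  have hv : v = (bV.repr v 0) • v₀ := (hVrep v).symm
  set μ := bV.repr v 0 with hμdef
  have h1 : h • v = ((h • μ) * a h) • v₀ := by
    rw [hv, V.semilinear, ← ha h, ← mul_smul]
  rw [h1, heq]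
  conv_rhs => rw [hv]
  rw [heq, smul_smul, smul_smul, W.semilinear h (μ * lam) w₀, ← hb h, smul_smul, smul_mul']
  congr 1
  rw [mul_assoc, hkey h, mul_assoc]
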